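/- The translation (−)^† of TS4 into MS4.t is full and faithful: for every formula φ of the language ML, TS4 ⊢ φ if and only if MS4.t ⊢ φ^†. -/

import Mathlib

/-- Formulas of the multimodal language `ML` with modalities `□`, `■_F`, `■_P`. -/
inductive TForm : Type
  | var : Nat → TForm
  | bot : TForm
  | and : TForm → TForm → TForm
  | or  : TForm → TForm → TForm
  | imp : TForm → TForm → TForm
  | box : TForm → TForm
  | bF  : TForm → TForm
  | bP  : TForm → TForm

def TForm.neg (φ : TForm) : TForm := φ.imp TForm.bot
def TForm.iff (φ ψ : TForm) : TForm := (φ.imp ψ).and (ψ.imp φ)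
/-- `◇φ := ¬□¬φ`. -/
def TForm.dia (φ : TForm) : TForm := ((φ.neg).box).neg
/-- `◆_F φ := ¬■_F¬φ`. -/
def TForm.dF (φ : TForm) : TForm := ((φ.neg).bF).neg
/-- `◆_P φ := ¬■_P¬φ`. -/
def TForm.dP (φ : TForm) : TForm := ((φ.neg).bP).neg

/-- The logic `TS4`: classical logic with S4-axioms for `□`, `■_F` and `■_P`,
the tense axioms `p → ■_P◆_F p` and `p → ■_F◆_P p`, and the connecting axioms
`◇p → ◆_F p` and `◆_F p → ◇(◆_F p ∧ ◆_P p)`, closed under modus ponens and the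
three necessitation rules (axioms are given as schemes, hence closure under
uniform substitution is automatic). -/
inductive TS4 : TForm → Prop
  -- classical propositional axioms
  | a1 (φ ψ : TForm) : TS4 (φ.imp (ψ.imp φ))
  | a2 (φ ψ χ : TForm) : TS4 ((φ.imp (ψ.imp χ)).imp ((φ.imp ψ).imp (φ.imp χ)))
  | a3 (φ ψ : TForm) : TS4 ((φ.and ψ).imp φ)
  | a4 (φ ψ : TForm) : TS4 ((φ.and ψ).imp ψ)
  | a5 (φ ψ : TForm) : TS4 (φ.imp (ψ.imp (φ.and ψ)))
  | a6 (φ ψ : TForm) : TS4 (φ.imp (φ.or ψ))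
  | a7 (φ ψ : TForm) : TS4 (ψ.imp (φ.or ψ))
  | a8 (φ ψ χ : TForm) : TS4 ((φ.imp χ).imp ((ψ.imp χ).imp ((φ.or ψ).imp χ)))
  | a9 (φ : TForm) : TS4 (TForm.bot.imp φ)
  | dne (φ : TForm) : TS4 ((φ.neg.neg).imp φ)
  -- S4-axioms for □
  | boxK (φ ψ : TForm) : TS4 (((φ.imp ψ).box).imp ((φ.box).imp ψ.box))
  | boxT (φ : TForm) : TS4 ((φ.box).imp φ)
  | box4 (φ : TForm) : TS4 ((φ.box).imp φ.box.box)
  -- S4-axioms for ■_F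
  | bFK (φ ψ : TForm) : TS4 (((φ.imp ψ).bF).imp ((φ.bF).imp ψ.bF))
  | bFT (φ : TForm) : TS4 ((φ.bF).imp φ)
  | bF4 (φ : TForm) : TS4 ((φ.bF).imp φ.bF.bF)
  -- S4-axioms for ■_P
  | bPK (φ ψ : TForm) : TS4 (((φ.imp ψ).bP).imp ((φ.bP).imp ψ.bP))
  | bPT (φ : TForm) : TS4 ((φ.bP).imp φ)
  | bP4 (φ : TForm) : TS4 ((φ.bP).imp φ.bP.bP)
  -- tense axioms
  | tense1 (φ : TForm) : TS4 (φ.imp ((φ.dF).bP))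
  | tense2 (φ : TForm) : TS4 (φ.imp ((φ.dP).bF))
  -- connecting axioms
  | conn1 (φ : TForm) : TS4 ((φ.dia).imp φ.dF)
  | conn2 (φ : TForm) : TS4 ((φ.dF).imp (((φ.dF).and φ.dP).dia))
  -- rules
  | mp (φ ψ : TForm) : TS4 (φ.imp ψ) → TS4 φ → TS4 ψ
  | necBox (φ : TForm) : TS4 φ → TS4 φ.box
  | necF (φ : TForm) : TS4 φ → TS4 φ.bF
  | necP (φ : TForm) : TS4 φ → TS4 φ.bP

/-- Formulas of the language `L_T∀` with modalities `□_F`, `□_P`, `∀`. -/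
inductive AForm : Type
  | var : Nat → AForm
  | bot : AForm
  | and : AForm → AForm → AForm
  | or  : AForm → AForm → AForm
  | imp : AForm → AForm → AForm
  | boxF : AForm → AForm
  | boxP : AForm → AForm
  | fa   : AForm → AForm

def AForm.neg (φ : AForm) : AForm := φ.imp AForm.bot
def AForm.iff (φ ψ : AForm) : AForm := (φ.imp ψ).and (ψ.imp φ)
/-- `◇_F φ := ¬□_F¬φ`. -/
def AForm.diaF (φ : AForm) : AForm := ((φ.neg).boxF).neg
/-- `◇_P φ := ¬□_P¬φ`. -/
def AForm.diaP (φ : AForm) : AForm := ((φ.neg).boxP).neg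
/-- `∃φ := ¬∀¬φ`. -/
def AForm.exq (φ : AForm) : AForm := ((φ.neg).fa).neg

/-- The tense `MS4` logic `MS4.t`: classical logic with S4-axioms for `□_F` and
`□_P`, the tense axioms `p → □_P◇_F p` and `p → □_F◇_P p`, the S5-axioms for
`∀`, and the left commutativity axiom `□_F∀p → ∀□_F p`, closed under modus
ponens and the three necessitation rules (axioms are given as schemes, hence
closure under uniform substitution is automatic). -/
inductive MS4t : AForm → Prop
  -- classical propositional axioms
  | a1 (φ ψ : AForm) : MS4t (φ.imp (ψ.imp φ))
  | a2 (φ ψ χ : AForm) : MS4t ((φ.imp (ψ.imp χ)).imp ((φ.imp ψ).imp (φ.imp χ)))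
  | a3 (φ ψ : AForm) : MS4t ((φ.and ψ).imp φ)
  | a4 (φ ψ : AForm) : MS4t ((φ.and ψ).imp ψ)
  | a5 (φ ψ : AForm) : MS4t (φ.imp (ψ.imp (φ.and ψ)))
  | a6 (φ ψ : AForm) : MS4t (φ.imp (φ.or ψ))
  | a7 (φ ψ : AForm) : MS4t (ψ.imp (φ.or ψ))
  | a8 (φ ψ χ : AForm) : MS4t ((φ.imp χ).imp ((ψ.imp χ).imp ((φ.or ψ).imp χ)))
  | a9 (φ : AForm) : MS4t (AForm.bot.imp φ)
  | dne (φ : AForm) : MS4t ((φ.neg.neg).imp φ)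
  -- S4-axioms for □_F
  | bFK (φ ψ : AForm) : MS4t (((φ.imp ψ).boxF).imp ((φ.boxF).imp ψ.boxF))
  | bFT (φ : AForm) : MS4t ((φ.boxF).imp φ)
  | bF4 (φ : AForm) : MS4t ((φ.boxF).imp φ.boxF.boxF)
  -- S4-axioms for □_P
  | bPK (φ ψ : AForm) : MS4t (((φ.imp ψ).boxP).imp ((φ.boxP).imp ψ.boxP))
  | bPT (φ : AForm) : MS4t ((φ.boxP).imp φ)
  | bP4 (φ : AForm) : MS4t ((φ.boxP).imp φ.boxP.boxP)
  -- tense axioms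
  | tense1 (φ : AForm) : MS4t (φ.imp ((φ.diaF).boxP))
  | tense2 (φ : AForm) : MS4t (φ.imp ((φ.diaP).boxF))
  -- S5-axioms for ∀
  | faK (φ ψ : AForm) : MS4t (((φ.imp ψ).fa).imp ((φ.fa).imp ψ.fa))
  | faT (φ : AForm) : MS4t ((φ.fa).imp φ)
  | fa4 (φ : AForm) : MS4t ((φ.fa).imp φ.fa.fa)
  | faB (φ : AForm) : MS4t (φ.imp (φ.exq.fa))
  -- left commutativity axiom
  | comm (φ : AForm) : MS4t ((φ.fa.boxF).imp (φ.boxF.fa))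
  -- rules
  | mp (φ ψ : AForm) : MS4t (φ.imp ψ) → MS4t φ → MS4t ψ
  | necF (φ : AForm) : MS4t φ → MS4t φ.boxF
  | necP (φ : AForm) : MS4t φ → MS4t φ.boxP
  | necFa (φ : AForm) : MS4t φ → MS4t φ.fa

/-- The translation `(−)^† : ML → L_T∀`, with `(□φ)^† = □_F φ^†`,
`(■_F φ)^† = □_F ∀ φ^†` and `(■_P φ)^† = ∀ □_P φ^†`. -/
def dagger : TForm → AForm
  | .var n => AForm.var n
  | .bot => AForm.bot
  | .and φ ψ => (dagger φ).and (dagger ψ)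
  | .or φ ψ => (dagger φ).or (dagger ψ)
  | .imp φ ψ => (dagger φ).imp (dagger ψ)
  | .box φ => (dagger φ).boxF
  | .bF φ => ((dagger φ).fa).boxF
  | .bP φ => ((dagger φ).boxP).fa


/-- A Hilbert-style propositional system. -/
structure PSys (F : Type) where
  Prv : F → Prop
  imp : F → F → F
  andF : F → F → F
  orF : F → F → F
  bot : F
  a1 : ∀ φ ψ, Prv (imp φ (imp ψ φ))
  a2 : ∀ φ ψ χ, Prv (imp (imp φ (imp ψ χ)) (imp (imp φ ψ) (imp φ χ)))
  a3 : ∀ φ ψ, Prv (imp (andF φ ψ) φ)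
  a4 : ∀ φ ψ, Prv (imp (andF φ ψ) ψ)
  a5 : ∀ φ ψ, Prv (imp φ (imp ψ (andF φ ψ)))
  a6 : ∀ φ ψ, Prv (imp φ (orF φ ψ))
  a7 : ∀ φ ψ, Prv (imp ψ (orF φ ψ))
  a8 : ∀ φ ψ χ, Prv (imp (imp φ χ) (imp (imp ψ χ) (imp (orF φ ψ) χ)))
  a9 : ∀ φ, Prv (imp bot φ)
  dne : ∀ φ, Prv (imp (imp (imp φ bot) bot) φ)
  mp : ∀ φ ψ, Prv (imp φ ψ) → Prv φ → Prv ψ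

namespace PSys

variable {F : Type} (S : PSys F)

def neg (φ : F) : F := S.imp φ S.bot

/-- Derivability from a set of hypotheses. -/
inductive Der (Γ : Set F) : F → Prop
  | ax {φ} : S.Prv φ → Der Γ φ
  | hyp {φ} : φ ∈ Γ → Der Γ φ
  | mp {φ ψ} : Der Γ (S.imp φ ψ) → Der Γ φ → Der Γ ψ

variable {S}

theorem Der.mono {Γ Δ : Set F} {φ} (h : S.Der Γ φ) (hsub : Γ ⊆ Δ) : S.Der Δ φ := by
  induction h with
  | ax h => exact .ax h
  | hyp h => exact .hyp (hsub h)
  | mp _ _ ih1 ih2 => exact .mp ih1 ih2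

theorem prv_id (φ : F) : S.Prv (S.imp φ φ) :=
  S.mp _ _ (S.mp _ _ (S.a2 φ (S.imp φ φ) φ) (S.a1 φ (S.imp φ φ))) (S.a1 φ φ)

theorem Der.deduction_aux {Δ : Set F} {φ} (h : S.Der Δ φ) :
    ∀ {Γ : Set F} {a : F}, Δ ⊆ insert a Γ → S.Der Γ (S.imp a φ) := by
  induction h with
  | ax h => intro Γ a _; exact .mp (.ax (S.a1 _ _)) (.ax h)
  | @hyp φ h =>
    intro Γ a hsub
    rcases hsub h with h | h
    · subst h; exact .ax (prv_id _)
    · exact .mp (.ax (S.a1 _ _)) (.hyp h)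
  | @mp φ ψ _ _ ih1 ih2 =>
    intro Γ a hsub
    exact .mp (.mp (.ax (S.a2 _ _ _)) (ih1 hsub)) (ih2 hsub)

theorem Der.deduction {Γ : Set F} {a φ : F} (h : S.Der (insert a Γ) φ) :
    S.Der Γ (S.imp a φ) := h.deduction_aux (le_refl _)

theorem der_nil {φ : F} (h : S.Der ∅ φ) : S.Prv φ := by
  induction h with
  | ax h => exact h
  | hyp h => exact absurd h (Set.notMem_empty _)
  | mp _ _ ih1 ih2 => exact S.mp _ _ ih1 ih2

theorem prv_of_der_singleton {a φ : F} (h : S.Der {a} φ) : S.Prv (S.imp a φ) := by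
  have : S.Der (insert a (∅ : Set F)) φ := h.mono (by simp)
  exact der_nil this.deduction

/-- Finite character of derivability. -/
theorem Der.finite {Γ : Set F} {φ} (h : S.Der Γ φ) :
    ∃ L : List F, (∀ ψ ∈ L, ψ ∈ Γ) ∧ S.Der {x | x ∈ L} φ := by
  induction h with
  | @ax φ h => exact ⟨[], by simp, .ax h⟩
  | @hyp φ h => exact ⟨[φ], by simpa, .hyp (by simp)⟩
  | @mp φ ψ _ _ ih1 ih2 =>
    obtain ⟨L1, hL1, d1⟩ := ih1
    obtain ⟨L2, hL2, d2⟩ := ih2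
    refine ⟨L1 ++ L2, ?_, ?_⟩
    · intro ψ hψ
      rcases List.mem_append.1 hψ with h | h
      exacts [hL1 _ h, hL2 _ h]
    · exact .mp (d1.mono (by intro x hx; simp_all)) (d2.mono (by intro x hx; simp_all))

def Consistent (Γ : Set F) : Prop := ¬ S.Der Γ S.bot

def MCS (Γ : Set F) : Prop := S.Consistent Γ ∧ ∀ φ, φ ∉ Γ → ¬ S.Consistent (insert φ Γ)

theorem Consistent.mono {Γ Δ : Set F} (h : S.Consistent Δ) (hsub : Γ ⊆ Δ) :
    S.Consistent Γ := fun hd => h (hd.mono hsub)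

/-- Lindenbaum's lemma. -/
theorem lindenbaum {Γ : Set F} (h : S.Consistent Γ) : ∃ Δ, Γ ⊆ Δ ∧ S.MCS Δ := by
  have hzorn : ∀ c ⊆ {Δ | S.Consistent Δ}, IsChain (· ⊆ ·) c → c.Nonempty →
      ∃ ub ∈ {Δ | S.Consistent Δ}, ∀ s ∈ c, s ⊆ ub := by
    intro c hc hchain hne
    refine ⟨⋃₀ c, ?_, fun s hs => Set.subset_sUnion_of_mem hs⟩
    intro hd
    obtain ⟨L, hL, hLder⟩ := hd.finite
    -- find a member of the chain containing all of L
    have : ∃ t ∈ c, ∀ ψ ∈ L, ψ ∈ t := by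
      clear hLder
      induction L with
      | nil => obtain ⟨t, ht⟩ := hne; exact ⟨t, ht, by simp⟩
      | cons a L ih =>
        obtain ⟨t, htc, ht⟩ := ih (fun ψ hψ => hL ψ (List.mem_cons_of_mem _ hψ))
        obtain ⟨s, hsc, has⟩ := hL a List.mem_cons_self
        rcases hchain.total htc hsc with hts | hst
        · refine ⟨s, hsc, ?_⟩
          intro ψ hψ
          rcases List.mem_cons.1 hψ with rfl | hψ
          exacts [has, hts (ht _ hψ)]
        · refine ⟨t, htc, ?_⟩
          intro ψ hψ
          rcases List.mem_cons.1 hψ with rfl | hψ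
          exacts [hst has, ht _ hψ]
    obtain ⟨t, htc, ht⟩ := this
    exact hc htc (hLder.mono (fun x hx => ht x hx))
  obtain ⟨m, hm, hmax⟩ := zorn_subset_nonempty {Δ | S.Consistent Δ} hzorn Γ h
  refine ⟨m, hm, hmax.1, fun φ hφ hcon => hφ ?_⟩
  have := hmax.2 hcon (Set.subset_insert φ m)
  exact this (Set.mem_insert φ m)

namespace MCS

variable {Γ : Set F} (h : S.MCS Γ)
include h

theorem mem_of_der {φ} (hd : S.Der Γ φ) : φ ∈ Γ := by
  by_contra hφ
  refine h.2 φ hφ ?_ |>.elim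
  intro hbot
  exact h.1 (.mp hbot.deduction hd)

theorem mem_of_prv {φ} (hp : S.Prv φ) : φ ∈ Γ := h.mem_of_der (.ax hp)

theorem mp_mem {φ ψ} (h1 : S.imp φ ψ ∈ Γ) (h2 : φ ∈ Γ) : ψ ∈ Γ :=
  h.mem_of_der (.mp (.hyp h1) (.hyp h2))

theorem bot_not_mem : S.bot ∉ Γ := fun hb => h.1 (.hyp hb)

theorem neg_mem_of_not_mem {φ} (hφ : φ ∉ Γ) : S.neg φ ∈ Γ := by
  by_contra hn
  have hcon := h.2 φ hφ
  have : S.Der Γ (S.imp φ S.bot) := by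
    by_contra _
    exact hcon.elim (fun hd => hn (h.mem_of_der hd.deduction))
  exact hn (h.mem_of_der this)

theorem not_mem_of_neg_mem {φ} (hφ : S.neg φ ∈ Γ) : φ ∉ Γ := fun hm =>
  h.bot_not_mem (h.mp_mem hφ hm)

theorem imp_mem_iff {φ ψ} : S.imp φ ψ ∈ Γ ↔ (φ ∈ Γ → ψ ∈ Γ) := by
  constructor
  · exact fun h1 h2 => h.mp_mem h1 h2
  · intro hi
    by_cases hφ : φ ∈ Γ
    · exact h.mem_of_der (.mp (.ax (S.a1 _ _)) (.hyp (hi hφ)))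
    · have hn := h.neg_mem_of_not_mem hφ
      exact h.mem_of_der (Der.deduction (Γ := Γ) (a := φ)
        (.mp (.ax (S.a9 ψ)) (.mp (.hyp (Set.mem_insert_of_mem _ hn)) (.hyp (Set.mem_insert _ _)))))

theorem and_mem_iff {φ ψ} : S.andF φ ψ ∈ Γ ↔ (φ ∈ Γ ∧ ψ ∈ Γ) := by
  constructor
  · intro h1
    exact ⟨h.mp_mem (h.mem_of_prv (S.a3 φ ψ)) h1, h.mp_mem (h.mem_of_prv (S.a4 φ ψ)) h1⟩
  · rintro ⟨h1, h2⟩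
    exact h.mp_mem (h.mp_mem (h.mem_of_prv (S.a5 φ ψ)) h1) h2

theorem or_mem_iff {φ ψ} : S.orF φ ψ ∈ Γ ↔ (φ ∈ Γ ∨ ψ ∈ Γ) := by
  constructor
  · intro h1
    by_contra hc
    push_neg at hc
    have n1 := h.neg_mem_of_not_mem hc.1
    have n2 := h.neg_mem_of_not_mem hc.2
    have : S.imp (S.orF φ ψ) S.bot ∈ Γ :=
      h.mp_mem (h.mp_mem (h.mem_of_prv (S.a8 φ ψ S.bot)) n1) n2
    exact h.bot_not_mem (h.mp_mem this h1)
  · rintro (h1 | h1)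
    exacts [h.mp_mem (h.mem_of_prv (S.a6 φ ψ)) h1, h.mp_mem (h.mem_of_prv (S.a7 φ ψ)) h1]

theorem neg_mem_iff {φ} : S.neg φ ∈ Γ ↔ φ ∉ Γ :=
  ⟨h.not_mem_of_neg_mem, h.neg_mem_of_not_mem⟩

end MCS

end PSys

namespace PSys

variable {F : Type} {S : PSys F}

theorem Der.cut {Γ Δ : Set F} {φ} (h : S.Der Γ φ) (hall : ∀ x ∈ Γ, S.Der Δ x) :
    S.Der Δ φ := by
  induction h with
  | ax h => exact .ax h
  | hyp h => exact hall _ h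
  | mp _ _ ih1 ih2 => exact .mp ih1 ih2

theorem prv_trans {a b c : F} (h1 : S.Prv (S.imp a b)) (h2 : S.Prv (S.imp b c)) :
    S.Prv (S.imp a c) := by
  apply prv_of_der_singleton
  exact .mp (.ax h2) (.mp (.ax h1) (.hyp rfl))

theorem prv_trans2 {x y z w : F} (h1 : S.Prv (S.imp x (S.imp y z)))
    (h2 : S.Prv (S.imp z w)) : S.Prv (S.imp x (S.imp y w)) := by
  apply der_nil
  apply Der.deduction
  apply Der.deduction
  exact .mp (.ax h2) (.mp (.mp (.ax h1) (.hyp (by simp))) (.hyp (by simp)))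

theorem prv_contra {a b : F} (h : S.Prv (S.imp a b)) :
    S.Prv (S.imp (S.neg b) (S.neg a)) := by
  apply der_nil
  apply Der.deduction
  apply Der.deduction
  exact Der.mp (φ := b) (.hyp (by simp [PSys.neg])) (.mp (.ax h) (.hyp (by simp)))

theorem prv_dneI (a : F) : S.Prv (S.imp a (S.neg (S.neg a))) := by
  apply der_nil
  apply Der.deduction
  apply Der.deduction
  exact Der.mp (φ := a) (.hyp (Set.mem_insert _ _)) (.hyp (by simp))

theorem prv_and_imp {a b c : F} (h1 : S.Prv (S.imp c a)) (h2 : S.Prv (S.imp c b)) :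
    S.Prv (S.imp c (S.andF a b)) := by
  apply prv_of_der_singleton
  exact .mp (.mp (.ax (S.a5 a b)) (.mp (.ax h1) (.hyp rfl))) (.mp (.ax h2) (.hyp rfl))

/-- A normal modal operator over a propositional system. -/
structure BoxOps (S : PSys F) where
  box : F → F
  nec : ∀ φ, S.Prv φ → S.Prv (box φ)
  k : ∀ φ ψ, S.Prv (S.imp (box (S.imp φ ψ)) (S.imp (box φ) (box ψ)))

namespace BoxOps

variable (B : BoxOps S)

def dia (φ : F) : F := S.neg (B.box (S.neg φ))

theorem mono {a b : F} (h : S.Prv (S.imp a b)) :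
    S.Prv (S.imp (B.box a) (B.box b)) :=
  S.mp _ _ (B.k a b) (B.nec _ h)

theorem k2 {a b c : F} (h : S.Prv (S.imp a (S.imp b c))) :
    S.Prv (S.imp (B.box a) (S.imp (B.box b) (B.box c))) :=
  prv_trans (B.mono h) (B.k b c)

theorem dia_mono {a b : F} (h : S.Prv (S.imp a b)) :
    S.Prv (S.imp (B.dia a) (B.dia b)) :=
  prv_contra (B.mono (prv_contra h))

/-- If `φ` is derivable from `{ψ | □ψ ∈ Γ}` then `□φ ∈ Γ` for an MCS `Γ`. -/
theorem der_transfer {Γ : Set F} (hΓ : S.MCS Γ) {φ : F}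
    (h : S.Der {ψ | B.box ψ ∈ Γ} φ) : B.box φ ∈ Γ := by
  induction h with
  | ax h => exact hΓ.mem_of_prv (B.nec _ h)
  | hyp h => exact h
  | @mp φ ψ _ _ ih1 ih2 => exact hΓ.mp_mem (hΓ.mp_mem (hΓ.mem_of_prv (B.k φ ψ)) ih1) ih2

/-- Existence lemma. -/
theorem existence {Γ : Set F} (hΓ : S.MCS Γ) {φ : F} (h : B.box φ ∉ Γ) :
    ∃ Δ, S.MCS Δ ∧ (∀ ψ, B.box ψ ∈ Γ → ψ ∈ Δ) ∧ φ ∉ Δ := by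
  have hcon : S.Consistent (insert (S.neg φ) {ψ | B.box ψ ∈ Γ}) := by
    intro hd
    apply h
    apply B.der_transfer hΓ
    exact .mp (.ax (S.dne φ)) hd.deduction
  obtain ⟨Δ, hsub, hΔ⟩ := lindenbaum hcon
  refine ⟨Δ, hΔ, fun ψ hψ => hsub (Set.mem_insert_of_mem _ hψ), ?_⟩
  exact hΔ.not_mem_of_neg_mem (hsub (Set.mem_insert _ _))

end BoxOps

end PSys

/-! ### Instances of the generic machinery -/

def TSys : PSys TForm :=
  { Prv := TS4, imp := TForm.imp, andF := TForm.and, orF := TForm.or, bot := TForm.bot,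
    a1 := TS4.a1, a2 := TS4.a2, a3 := TS4.a3, a4 := TS4.a4, a5 := TS4.a5,
    a6 := TS4.a6, a7 := TS4.a7, a8 := TS4.a8, a9 := TS4.a9, dne := TS4.dne, mp := TS4.mp }

def MSys : PSys AForm :=
  { Prv := MS4t, imp := AForm.imp, andF := AForm.and, orF := AForm.or, bot := AForm.bot,
    a1 := MS4t.a1, a2 := MS4t.a2, a3 := MS4t.a3, a4 := MS4t.a4, a5 := MS4t.a5,
    a6 := MS4t.a6, a7 := MS4t.a7, a8 := MS4t.a8, a9 := MS4t.a9, dne := MS4t.dne, mp := MS4t.mp }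

def TBox : PSys.BoxOps TSys := ⟨TForm.box, TS4.necBox, TS4.boxK⟩
def TBF : PSys.BoxOps TSys := ⟨TForm.bF, TS4.necF, TS4.bFK⟩
def TBP : PSys.BoxOps TSys := ⟨TForm.bP, TS4.necP, TS4.bPK⟩

def MBF : PSys.BoxOps MSys := ⟨AForm.boxF, MS4t.necF, MS4t.bFK⟩
def MBP : PSys.BoxOps MSys := ⟨AForm.boxP, MS4t.necP, MS4t.bPK⟩
def MFA : PSys.BoxOps MSys := ⟨AForm.fa, MS4t.necFa, MS4t.faK⟩

/-! ### Derived rules in `MS4.t` -/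

namespace MS4t

theorem mtrans {a b c : AForm} (h1 : MS4t (a.imp b)) (h2 : MS4t (b.imp c)) :
    MS4t (a.imp c) := PSys.prv_trans (S := MSys) h1 h2

theorem mcontra {a b : AForm} (h : MS4t (a.imp b)) : MS4t (b.neg.imp a.neg) :=
  PSys.prv_contra (S := MSys) h

theorem mdneI (a : AForm) : MS4t (a.imp a.neg.neg) := PSys.prv_dneI (S := MSys) a

theorem mandI {a b c : AForm} (h1 : MS4t (c.imp a)) (h2 : MS4t (c.imp b)) :
    MS4t (c.imp (a.and b)) := PSys.prv_and_imp (S := MSys) h1 h2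

theorem monoF {a b : AForm} (h : MS4t (a.imp b)) : MS4t (a.boxF.imp b.boxF) := MBF.mono h
theorem monoP {a b : AForm} (h : MS4t (a.imp b)) : MS4t (a.boxP.imp b.boxP) := MBP.mono h
theorem monoFa {a b : AForm} (h : MS4t (a.imp b)) : MS4t (a.fa.imp b.fa) := MFA.mono h

theorem k2F {a b c : AForm} (h : MS4t (a.imp (b.imp c))) :
    MS4t (a.boxF.imp (b.boxF.imp c.boxF)) := MBF.k2 h
theorem k2Fa {a b c : AForm} (h : MS4t (a.imp (b.imp c))) :
    MS4t (a.fa.imp (b.fa.imp c.fa)) := MFA.k2 h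

theorem dmonoF {a b : AForm} (h : MS4t (a.imp b)) :
    MS4t ((a.neg.boxF).neg.imp ((b.neg.boxF).neg)) := MBF.dia_mono h

theorem adjP {a b : AForm} (h : MS4t (a.diaF.imp b)) : MS4t (a.imp b.boxP) :=
  mtrans (MS4t.tense1 a) (monoP h)

theorem exq_neg (a : AForm) : MS4t ((a.neg.exq).imp (a.fa).neg) :=
  mcontra (monoFa (mdneI a))

theorem s5a (a : AForm) : MS4t ((a.fa).neg.imp ((a.fa).neg.fa)) :=
  mtrans (MS4t.faB (a.fa).neg)
    (monoFa (mtrans (exq_neg (a.fa)) (mcontra (MS4t.fa4 a))))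

theorem exq_fa (a : AForm) : MS4t (((a.fa).exq).imp a) :=
  have c2 : MS4t (a.neg.imp ((a.fa).neg.fa)) := mtrans (mcontra (MS4t.faT a)) (s5a a)
  mtrans (mcontra c2) (MS4t.dne a)

theorem d1 (a : AForm) : MS4t (((a.diaF).neg.fa).neg.imp (((a.exq).neg.boxF).neg)) :=
  have step1 : MS4t (((a.diaF).neg.fa).neg.imp (((a.neg.boxF).fa).neg)) :=
    mcontra (monoFa (mdneI (a.neg.boxF)))
  have step2 : MS4t (((a.neg.boxF).fa).neg.imp (((a.neg.fa).boxF).neg)) :=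
    mcontra (MS4t.comm a.neg)
  have step3 : MS4t (((a.neg.fa).boxF).neg.imp ((((a.neg.fa).neg.neg).boxF).neg)) :=
    mcontra (monoF (MS4t.dne (a.neg.fa)))
  mtrans (mtrans step1 step2) step3

theorem m2 (a : AForm) : MS4t ((((a.boxP).neg.boxF).neg).imp a) :=
  have m2a : MS4t (a.neg.imp (((a.boxP).neg).boxF)) :=
    mtrans (MS4t.tense2 a.neg) (monoF (mcontra (monoP (mdneI a))))
  mtrans (mcontra m2a) (MS4t.dne a)

theorem m1 (a : AForm) : MS4t ((((a.fa).neg.boxF).neg).imp (((a.neg.boxF).neg).fa)) :=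
  mtrans (MS4t.faB ((a.fa).neg.boxF).neg)
    (monoFa (mtrans (d1 (a.fa)) (dmonoF (exq_fa a))))

theorem revcomm (a : AForm) : MS4t (((a.boxP).fa).imp ((a.fa).boxP)) :=
  adjP (mtrans (m1 (a.boxP)) (monoFa (m2 a)))

/-! ### Translations of the `TS4` axioms -/

theorem fwd_bFK (a b : AForm) :
    MS4t (((a.imp b).fa.boxF).imp ((a.fa.boxF).imp (b.fa.boxF))) := k2F (MS4t.faK a b)

theorem fwd_bFT (a : AForm) : MS4t ((a.fa.boxF).imp a) :=
  mtrans (MS4t.bFT a.fa) (MS4t.faT a)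

theorem fwd_bF4 (a : AForm) : MS4t ((a.fa.boxF).imp (((a.fa.boxF).fa).boxF)) :=
  have l1 : MS4t ((a.fa.boxF).imp ((a.fa.boxF).fa)) :=
    mtrans (monoF (MS4t.fa4 a)) (MS4t.comm a.fa)
  mtrans (MS4t.bF4 a.fa) (monoF l1)

theorem fwd_bPK (a b : AForm) :
    MS4t (((a.imp b).boxP.fa).imp ((a.boxP.fa).imp (b.boxP.fa))) := k2Fa (MS4t.bPK a b)

theorem fwd_bPT (a : AForm) : MS4t ((a.boxP.fa).imp a) :=
  mtrans (MS4t.faT a.boxP) (MS4t.bPT a)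

theorem fwd_bP4 (a : AForm) : MS4t ((a.boxP.fa).imp (((a.boxP.fa).boxP).fa)) :=
  have s : MS4t (((a.boxP).fa).imp (((a.boxP).fa).boxP)) :=
    mtrans (monoFa (MS4t.bP4 a)) (revcomm a.boxP)
  mtrans (MS4t.fa4 a.boxP) (monoFa s)

theorem fwd_tense1 (a : AForm) : MS4t (a.imp (((((a.neg.fa).boxF).neg).boxP).fa)) :=
  have h1 : MS4t (((a.exq).diaF).imp (((a.neg.fa).boxF).neg)) :=
    mcontra (monoF (mdneI (a.neg.fa)))
  mtrans (MS4t.faB a) (monoFa (adjP h1))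

theorem fwd_tense2 (a : AForm) : MS4t (a.imp (((((a.neg.boxP).fa).neg).fa).boxF)) :=
  have h2 : MS4t (((a.neg.boxP).neg).imp ((((a.neg.boxP).fa).neg).fa)) :=
    mtrans (mcontra (MS4t.faT (a.neg.boxP))) (s5a (a.neg.boxP))
  mtrans (MS4t.tense2 a) (monoF h2)

theorem fwd_conn1 (a : AForm) : MS4t (((a.neg.boxF).neg).imp (((a.neg.fa).boxF).neg)) :=
  mcontra (monoF (MS4t.faT a.neg))

theorem fwd_conn2 (a : AForm) :
    MS4t ((((a.neg.fa).boxF).neg).imp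
      ((((((a.neg.fa).boxF).neg).and (((a.neg.boxP).fa).neg)).neg.boxF).neg)) :=
  have p1 : MS4t (((a.neg.fa).neg).imp (((a.neg.fa).boxF).neg)) :=
    mcontra (MS4t.bFT (a.neg.fa))
  have p2 : MS4t (((a.neg.fa).neg).imp (((a.neg.boxP).fa).neg)) :=
    mcontra (monoFa (MS4t.bPT a.neg))
  have p3 := mandI p1 p2
  have p4 := dmonoF p3
  have p5 : MS4t ((((a.neg.fa)).boxF).neg.imp ((((a.neg.fa).neg.neg).boxF).neg)) :=
    mcontra (monoF (MS4t.dne (a.neg.fa)))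
  mtrans p5 p4

end MS4t

/-- Fullness: the forward direction of the main theorem. -/
theorem dagger_of_TS4 {φ : TForm} (h : TS4 φ) : MS4t (dagger φ) := by
  induction h with
  | a1 φ ψ => exact MS4t.a1 _ _
  | a2 φ ψ χ => exact MS4t.a2 _ _ _
  | a3 φ ψ => exact MS4t.a3 _ _
  | a4 φ ψ => exact MS4t.a4 _ _
  | a5 φ ψ => exact MS4t.a5 _ _
  | a6 φ ψ => exact MS4t.a6 _ _
  | a7 φ ψ => exact MS4t.a7 _ _
  | a8 φ ψ χ => exact MS4t.a8 _ _ _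
  | a9 φ => exact MS4t.a9 _
  | dne φ => exact MS4t.dne _
  | boxK φ ψ => exact MS4t.bFK _ _
  | boxT φ => exact MS4t.bFT _
  | box4 φ => exact MS4t.bF4 _
  | bFK φ ψ => exact MS4t.fwd_bFK _ _
  | bFT φ => exact MS4t.fwd_bFT _
  | bF4 φ => exact MS4t.fwd_bF4 _
  | bPK φ ψ => exact MS4t.fwd_bPK _ _
  | bPT φ => exact MS4t.fwd_bPT _
  | bP4 φ => exact MS4t.fwd_bP4 _
  | tense1 φ => exact MS4t.fwd_tense1 _
  | tense2 φ => exact MS4t.fwd_tense2 _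
  | conn1 φ => exact MS4t.fwd_conn1 _
  | conn2 φ => exact MS4t.fwd_conn2 _
  | mp φ ψ h1 h2 ih1 ih2 => exact MS4t.mp _ _ ih1 ih2
  | necBox φ h ih => exact MS4t.necF _ ih
  | necF φ h ih => exact MS4t.necF _ (MS4t.necFa _ ih)
  | necP φ h ih => exact MS4t.necFa _ (MS4t.necP _ ih)

/-! ### The canonical model of `TS4` -/

/-- A derived theorem of `TS4`: `■_F φ → □φ`. -/
theorem ts_bF_box (φ : TForm) : TS4 ((φ.bF).imp φ.box) := by
  have s1 : TS4 ((φ.bF).imp ((φ.neg.neg).bF)) := TBF.mono (PSys.prv_dneI (S := TSys) φ)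
  have s2 : TS4 (((φ.neg.neg).bF).imp ((φ.neg.neg).bF).neg.neg) :=
    PSys.prv_dneI (S := TSys) _
  have s3 : TS4 ((((φ.neg.neg).bF).neg.neg).imp (((φ.neg.neg).box).neg.neg)) :=
    PSys.prv_contra (S := TSys) (TS4.conn1 φ.neg)
  have s4 : TS4 (((((φ.neg.neg).box).neg.neg)).imp ((φ.neg.neg).box)) := TS4.dne _
  have s5 : TS4 (((φ.neg.neg).box).imp φ.box) := TBox.mono (TS4.dne φ)
  exact PSys.prv_trans (S := TSys) s1 (PSys.prv_trans (S := TSys) s2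
    (PSys.prv_trans (S := TSys) s3 (PSys.prv_trans (S := TSys) s4 s5)))

/-- Worlds of the canonical model. -/
def TW : Type := {Γ : Set TForm // TSys.MCS Γ}

def leR (w v : TW) : Prop := ∀ φ : TForm, φ.box ∈ w.1 → φ ∈ v.1
def qF (w v : TW) : Prop := ∀ φ : TForm, φ.bF ∈ w.1 → φ ∈ v.1
def qP (w v : TW) : Prop := ∀ φ : TForm, φ.bP ∈ w.1 → φ ∈ v.1
def eqR (w v : TW) : Prop := qF w v ∧ qF v w

theorem leR.refl (w : TW) : leR w w :=
  fun φ h => w.2.mp_mem (w.2.mem_of_prv (TS4.boxT φ)) h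

theorem leR.trans {w v u : TW} (h1 : leR w v) (h2 : leR v u) : leR w u :=
  fun φ h => h2 φ (h1 _ (w.2.mp_mem (w.2.mem_of_prv (TS4.box4 φ)) h))

theorem qF.refl (w : TW) : qF w w :=
  fun φ h => w.2.mp_mem (w.2.mem_of_prv (TS4.bFT φ)) h

theorem qF.trans {w v u : TW} (h1 : qF w v) (h2 : qF v u) : qF w u :=
  fun φ h => h2 φ (h1 _ (w.2.mp_mem (w.2.mem_of_prv (TS4.bF4 φ)) h))

theorem leR.qF {w v : TW} (h : leR w v) : qF w v :=
  fun φ hφ => h φ (w.2.mp_mem (w.2.mem_of_prv (ts_bF_box φ)) hφ)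

theorem eqR.refl (w : TW) : eqR w w := ⟨qF.refl w, qF.refl w⟩
theorem eqR.symm {w v : TW} (h : eqR w v) : eqR v w := ⟨h.2, h.1⟩
theorem eqR.trans {w v u : TW} (h1 : eqR w v) (h2 : eqR v u) : eqR w u :=
  ⟨h1.1.trans h2.1, h2.2.trans h1.2⟩

theorem qP_iff (w v : TW) : qP w v ↔ qF v w := by
  constructor
  · intro h ψ hψ
    by_contra hn
    have hneg : TSys.neg ψ ∈ w.1 := w.2.neg_mem_of_not_mem hn
    have ht : ((TForm.neg ψ).dF).bP ∈ w.1 :=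
      w.2.mp_mem (w.2.mem_of_prv (TS4.tense1 ψ.neg)) hneg
    have hdf : (TForm.neg ψ).dF ∈ v.1 := h _ ht
    have hnot : (ψ.neg.neg).bF ∉ v.1 := v.2.not_mem_of_neg_mem hdf
    exact hnot (v.2.mp_mem (v.2.mem_of_prv (TBF.mono (PSys.prv_dneI (S := TSys) ψ))) hψ)
  · intro h ψ hψ
    by_contra hn
    have hneg : TSys.neg ψ ∈ v.1 := v.2.neg_mem_of_not_mem hn
    have ht : ((TForm.neg ψ).dP).bF ∈ v.1 :=
      v.2.mp_mem (v.2.mem_of_prv (TS4.tense2 ψ.neg)) hneg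
    have hdp : (TForm.neg ψ).dP ∈ w.1 := h _ ht
    have hnot : (ψ.neg.neg).bP ∉ w.1 := w.2.not_mem_of_neg_mem hdp
    exact hnot (w.2.mp_mem (w.2.mem_of_prv (TBP.mono (PSys.prv_dneI (S := TSys) ψ))) hψ)

theorem dF_mem {w v : TW} (h : qF w v) {δ : TForm} (hδ : δ ∈ v.1) : δ.dF ∈ w.1 := by
  have h1 : (δ.neg).bF ∉ w.1 := fun hb => v.2.not_mem_of_neg_mem (h _ hb) hδ
  exact w.2.neg_mem_of_not_mem h1

/-- The key frame property of the canonical model (from the second connecting axiom):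
if `w Q_F v` then there is `u` above `w` in the same `Q_F`-cluster as `v`. -/
theorem c2 {w v : TW} (h : qF w v) : ∃ u : TW, leR w u ∧ eqR u v := by
  classical
  set base : Set TForm := {ψ | ψ.box ∈ w.1} with hbase
  set S0 : Set TForm := base ∪ {x | ∃ δ ∈ v.1, x = δ.dF ∨ x = δ.dP} with hS0
  have hcon : TSys.Consistent S0 := by
    intro hder
    obtain ⟨L, hL, hLd⟩ := hder.finite
    have key : ∀ (L : List TForm), (∀ x ∈ L, x ∈ S0) → ∃ δ, δ ∈ v.1 ∧
        ∀ x ∈ L, TSys.Der (insert (TForm.dF δ) (insert (TForm.dP δ) base)) x := by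
      intro L
      induction L with
      | nil =>
        exact fun _ => ⟨TForm.bot.neg, v.2.mem_of_prv (PSys.prv_id TForm.bot), by simp⟩
      | cons a L ih =>
        intro hall
        obtain ⟨δ0, hδ0, hder0⟩ := ih (fun x hx => hall x (List.mem_cons_of_mem _ hx))
        rcases hall a List.mem_cons_self with ha | ⟨δ1, hδ1, heq⟩
        · refine ⟨δ0, hδ0, ?_⟩
          intro x hx
          rcases List.mem_cons.1 hx with rfl | hx
          · exact .hyp (Set.mem_insert_of_mem _ (Set.mem_insert_of_mem _ ha))
          · exact hder0 x hx
        · have hand : (δ1.and δ0) ∈ v.1 := v.2.and_mem_iff.2 ⟨hδ1, hδ0⟩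
          have pF1 : TS4 (((δ1.and δ0).dF).imp (δ1.dF)) := TBF.dia_mono (TS4.a3 δ1 δ0)
          have pP1 : TS4 (((δ1.and δ0).dP).imp (δ1.dP)) := TBP.dia_mono (TS4.a3 δ1 δ0)
          have pF0 : TS4 (((δ1.and δ0).dF).imp (δ0.dF)) := TBF.dia_mono (TS4.a4 δ1 δ0)
          have pP0 : TS4 (((δ1.and δ0).dP).imp (δ0.dP)) := TBP.dia_mono (TS4.a4 δ1 δ0)
          refine ⟨δ1.and δ0, hand, ?_⟩
          intro x hx
          rcases List.mem_cons.1 hx with rfl | hx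
          · rcases heq with rfl | rfl
            · exact .mp (.ax pF1) (.hyp (Set.mem_insert _ _))
            · exact .mp (.ax pP1) (.hyp (Set.mem_insert_of_mem _ (Set.mem_insert _ _)))
          · refine (hder0 x hx).cut ?_
            intro y hy
            rcases hy with rfl | hy
            · exact .mp (.ax pF0) (.hyp (Set.mem_insert _ _))
            · rcases hy with rfl | hy
              · exact .mp (.ax pP0) (.hyp (Set.mem_insert_of_mem _ (Set.mem_insert _ _)))
              · exact .hyp (Set.mem_insert_of_mem _ (Set.mem_insert_of_mem _ hy))
    obtain ⟨δ, hδv, hders⟩ := key L hL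
    have hS1 : TSys.Der (insert (TForm.dF δ) (insert (TForm.dP δ) base)) TForm.bot :=
      hLd.cut (fun x hx => hders x hx)
    have h3 : TSys.Der base ((TForm.dP δ).imp ((TForm.dF δ).imp TForm.bot)) :=
      hS1.deduction.deduction
    have h4 : TSys.Der base (TSys.neg ((δ.dF).and (δ.dP))) := by
      apply PSys.Der.deduction
      exact .mp (.mp (h3.mono (Set.subset_insert _ _))
          (.mp (.ax (TS4.a4 (δ.dF) (δ.dP))) (.hyp (Set.mem_insert _ _))))
        (.mp (.ax (TS4.a3 (δ.dF) (δ.dP))) (.hyp (Set.mem_insert _ _)))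
    have h5 : ((((δ.dF).and (δ.dP)).neg).box) ∈ w.1 := TBox.der_transfer w.2 h4
    have h6 : δ.dF ∈ w.1 := dF_mem h hδv
    have h7 : ((δ.dF).and (δ.dP)).dia ∈ w.1 :=
      w.2.mp_mem (w.2.mem_of_prv (TS4.conn2 δ)) h6
    exact w.2.not_mem_of_neg_mem h7 h5
  obtain ⟨Θ, hsub, hΘ⟩ := PSys.lindenbaum hcon
  refine ⟨⟨Θ, hΘ⟩, ?_, ?_, ?_⟩
  · exact fun φ hφ => hsub (Or.inl hφ)
  · -- qF Θ v
    intro ψ hψ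
    by_contra hn
    have hneg : TSys.neg ψ ∈ v.1 := v.2.neg_mem_of_not_mem hn
    have hdf : (TForm.neg ψ).dF ∈ Θ := hsub (Or.inr ⟨ψ.neg, hneg, Or.inl rfl⟩)
    have hnot : (ψ.neg.neg).bF ∉ Θ := hΘ.not_mem_of_neg_mem hdf
    exact hnot (hΘ.mp_mem (hΘ.mem_of_prv (TBF.mono (PSys.prv_dneI (S := TSys) ψ))) hψ)
  · -- qF v Θ, via qP Θ v
    apply (qP_iff ⟨Θ, hΘ⟩ v).1
    intro ψ hψ
    by_contra hn
    have hneg : TSys.neg ψ ∈ v.1 := v.2.neg_mem_of_not_mem hn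
    have hdp : (TForm.neg ψ).dP ∈ Θ := hsub (Or.inr ⟨ψ.neg, hneg, Or.inr rfl⟩)
    have hnot : (ψ.neg.neg).bP ∉ Θ := hΘ.not_mem_of_neg_mem hdp
    exact hnot (hΘ.mp_mem (hΘ.mem_of_prv (TBP.mono (PSys.prv_dneI (S := TSys) ψ))) hψ)

theorem qF_decomp {w u : TW} : qF w u ↔ ∃ v, leR w v ∧ eqR v u := by
  constructor
  · exact fun h => c2 h
  · rintro ⟨v, hle, hE⟩
    exact hle.qF.trans hE.1

theorem qP_decomp {w u : TW} : qP w u ↔ ∃ v, eqR w v ∧ leR u v := by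
  rw [qP_iff]
  constructor
  · intro h
    obtain ⟨v, hle, hE⟩ := c2 h
    exact ⟨v, hE.symm, hle⟩
  · rintro ⟨v, hE, hle⟩
    exact hle.qF.trans hE.2

/-- Truth in the canonical model. -/
def satT : TW → TForm → Prop
  | w, .var n => TForm.var n ∈ w.1
  | _, .bot => False
  | w, .and φ ψ => satT w φ ∧ satT w ψ
  | w, .or φ ψ => satT w φ ∨ satT w ψ
  | w, .imp φ ψ => satT w φ → satT w ψ
  | w, .box φ => ∀ v, leR w v → satT v φ
  | w, .bF φ => ∀ v, qF w v → satT v φ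
  | w, .bP φ => ∀ v, qP w v → satT v φ

/-- The truth lemma for the canonical model. -/
theorem truthT (φ : TForm) : ∀ w : TW, satT w φ ↔ φ ∈ w.1 := by
  induction φ with
  | var n => exact fun w => Iff.rfl
  | bot =>
    intro w
    simp only [satT]
    exact ⟨False.elim, fun h => w.2.bot_not_mem h⟩
  | and φ ψ ih1 ih2 =>
    intro w
    simp only [satT]
    constructor
    · rintro ⟨h1, h2⟩
      exact w.2.and_mem_iff.2 ⟨(ih1 w).1 h1, (ih2 w).1 h2⟩
    · intro h
      have := w.2.and_mem_iff.1 h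
      exact ⟨(ih1 w).2 this.1, (ih2 w).2 this.2⟩
  | or φ ψ ih1 ih2 =>
    intro w
    simp only [satT]
    constructor
    · rintro (h1 | h1)
      · exact w.2.or_mem_iff.2 (Or.inl ((ih1 w).1 h1))
      · exact w.2.or_mem_iff.2 (Or.inr ((ih2 w).1 h1))
    · intro h
      rcases w.2.or_mem_iff.1 h with h1 | h1
      · exact Or.inl ((ih1 w).2 h1)
      · exact Or.inr ((ih2 w).2 h1)
  | imp φ ψ ih1 ih2 =>
    intro w
    simp only [satT]
    constructor
    · intro h
      exact w.2.imp_mem_iff.2 (fun h1 => (ih2 w).1 (h ((ih1 w).2 h1)))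
    · intro h h1
      exact (ih2 w).2 (w.2.imp_mem_iff.1 h ((ih1 w).1 h1))
  | box φ ih =>
    intro w
    simp only [satT]
    constructor
    · intro h
      by_contra hb
      obtain ⟨Δ, hΔ, hrel, hφ⟩ := TBox.existence w.2 hb
      exact hφ ((ih ⟨Δ, hΔ⟩).1 (h ⟨Δ, hΔ⟩ hrel))
    · intro h v hv
      exact (ih v).2 (hv φ h)
  | bF φ ih =>
    intro w
    simp only [satT]
    constructor
    · intro h
      by_contra hb
      obtain ⟨Δ, hΔ, hrel, hφ⟩ := TBF.existence w.2 hb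
      exact hφ ((ih ⟨Δ, hΔ⟩).1 (h ⟨Δ, hΔ⟩ hrel))
    · intro h v hv
      exact (ih v).2 (hv φ h)
  | bP φ ih =>
    intro w
    simp only [satT]
    constructor
    · intro h
      by_contra hb
      obtain ⟨Δ, hΔ, hrel, hφ⟩ := TBP.existence w.2 hb
      exact hφ ((ih ⟨Δ, hΔ⟩).1 (h ⟨Δ, hΔ⟩ hrel))
    · intro h v hv
      exact (ih v).2 (hv φ h)

/-- Truth for `L_T∀`-formulas over the canonical model, viewed as an `MS4.t`-model. -/
def satA : TW → AForm → Prop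
  | w, .var n => TForm.var n ∈ w.1
  | _, .bot => False
  | w, .and φ ψ => satA w φ ∧ satA w ψ
  | w, .or φ ψ => satA w φ ∨ satA w ψ
  | w, .imp φ ψ => satA w φ → satA w ψ
  | w, .boxF φ => ∀ v, leR w v → satA v φ
  | w, .boxP φ => ∀ v, leR v w → satA v φ
  | w, .fa φ => ∀ v, eqR w v → satA v φ

theorem transfer (φ : TForm) : ∀ w : TW, satA w (dagger φ) ↔ satT w φ := by
  induction φ with
  | var n => exact fun w => Iff.rfl
  | bot => exact fun w => Iff.rfl
  | and φ ψ ih1 ih2 => intro w; simp only [dagger, satA, satT, ih1 w, ih2 w]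
  | or φ ψ ih1 ih2 => intro w; simp only [dagger, satA, satT, ih1 w, ih2 w]
  | imp φ ψ ih1 ih2 => intro w; simp only [dagger, satA, satT, ih1 w, ih2 w]
  | box φ ih =>
    intro w
    simp only [dagger, satA, satT]
    exact ⟨fun h v hv => (ih v).1 (h v hv), fun h v hv => (ih v).2 (h v hv)⟩
  | bF φ ih =>
    intro w
    simp only [dagger, satA, satT]
    constructor
    · intro h u hu
      obtain ⟨v, hle, hE⟩ := qF_decomp.1 hu
      exact (ih u).1 (h v hle u hE)
    · intro h v hle u hE
      exact (ih u).2 (h u (qF_decomp.2 ⟨v, hle, hE⟩))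
  | bP φ ih =>
    intro w
    simp only [dagger, satA, satT]
    constructor
    · intro h u hu
      obtain ⟨v, hE, hle⟩ := qP_decomp.1 hu
      exact (ih u).1 (h v hE u hle)
    · intro h v hE u hle
      exact (ih u).2 (h u (qP_decomp.2 ⟨v, hE, hle⟩))

/-- Soundness of `MS4.t` with respect to the canonical model. -/
theorem soundA {ψ : AForm} (h : MS4t ψ) : ∀ w : TW, satA w ψ := by
  induction h with
  | a1 φ ψ => intro w; simp only [satA]; tauto
  | a2 φ ψ χ => intro w; simp only [satA]; tauto
  | a3 φ ψ => intro w; simp only [satA]; tauto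
  | a4 φ ψ => intro w; simp only [satA]; tauto
  | a5 φ ψ => intro w; simp only [satA]; tauto
  | a6 φ ψ => intro w; simp only [satA]; tauto
  | a7 φ ψ => intro w; simp only [satA]; tauto
  | a8 φ ψ χ => intro w; simp only [satA]; tauto
  | a9 φ => intro w; simp only [satA]; tauto
  | dne φ => intro w; simp only [AForm.neg, satA]; tauto
  | bFK φ ψ =>
    intro w
    simp only [satA]
    intro h1 h2 v hv
    exact h1 v hv (h2 v hv)
  | bFT φ =>
    intro w
    simp only [satA]
    intro h1
    exact h1 w (leR.refl w)
  | bF4 φ =>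
    intro w
    simp only [satA]
    intro h1 v hv u hu
    exact h1 u (hv.trans hu)
  | bPK φ ψ =>
    intro w
    simp only [satA]
    intro h1 h2 v hv
    exact h1 v hv (h2 v hv)
  | bPT φ =>
    intro w
    simp only [satA]
    intro h1
    exact h1 w (leR.refl w)
  | bP4 φ =>
    intro w
    simp only [satA]
    intro h1 v hv u hu
    exact h1 u (hu.trans hv)
  | tense1 φ =>
    intro w
    simp only [AForm.diaF, AForm.neg, satA]
    intro hφ v hvw hall
    exact hall w hvw hφ
  | tense2 φ =>
    intro w
    simp only [AForm.diaP, AForm.neg, satA]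
    intro hφ v hwv hall
    exact hall w hwv hφ
  | faK φ ψ =>
    intro w
    simp only [satA]
    intro h1 h2 v hv
    exact h1 v hv (h2 v hv)
  | faT φ =>
    intro w
    simp only [satA]
    intro h1
    exact h1 w (eqR.refl w)
  | fa4 φ =>
    intro w
    simp only [satA]
    intro h1 v hv u hu
    exact h1 u (hv.trans hu)
  | faB φ =>
    intro w
    simp only [AForm.exq, AForm.neg, satA]
    intro hφ v hE hall
    exact hall w hE.symm hφ
  | comm φ =>
    intro w
    simp only [satA]
    intro h z hz t ht
    have hqF : qF w t := (hz.1.trans ht.qF)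
    obtain ⟨y, hle, hE⟩ := c2 hqF
    exact h y hle t hE
  | mp φ ψ h1 h2 ih1 ih2 => exact fun w => ih1 w (ih2 w)
  | necF φ h ih => intro w v hv; exact ih v
  | necP φ h ih => intro w v hv; exact ih v
  | necFa φ h ih => intro w v hv; exact ih v

/-- The translation `(−)^†` of `TS4` into `MS4.t` is full and
faithful: `TS4 ⊢ φ` iff `MS4.t ⊢ φ^†`. -/
theorem dagger_full_and_faithful (φ : TForm) : TS4 φ ↔ MS4t (dagger φ) := by
  constructor
  · exact dagger_of_TS4
  · intro h
    by_contra hT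
    have hcon : TSys.Consistent {TForm.neg φ} := by
      intro hd
      exact hT (TS4.mp _ _ (TS4.dne φ) (PSys.prv_of_der_singleton hd))
    obtain ⟨Δ, hsub, hΔ⟩ := PSys.lindenbaum hcon
    have h1 : satA ⟨Δ, hΔ⟩ (dagger φ) := soundA h ⟨Δ, hΔ⟩
    have h2 : satT ⟨Δ, hΔ⟩ φ := (transfer φ ⟨Δ, hΔ⟩).1 h1
    have h3 : φ ∈ Δ := (truthT φ ⟨Δ, hΔ⟩).1 h2
    exact hΔ.not_mem_of_neg_mem (hsub rfl) h3
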